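/- Let 𝒢_C be the rescaled Gaussian kernel, and let Q₂(r) = ((B(x,3r/2) \ B(x,5r/4)) ∩ Ω) × (t - (3r/2)², t]. Then for any (z,τ) with z ∈ B(x,r) and τ ∈ (t - r², t], one has ∫_{Q₂(r)} 𝒢_C(z - y, τ - ρ)² dy dρ ≤ C' r^{2-n}, for a constant C' depending only on n and C. -/

import Mathlib

open Real MeasureTheory Set Metric

/-- Rescaled Gaussian kernel, extended by `0` for nonpositive times. -/
noncomputable def gaussKernelC (n : ℕ) (c : ℝ) (x : EuclideanSpace ℝ (Fin n)) (t : ℝ) : ℝ :=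
  if 0 < t then c⁻¹ * (4 * π * t) ^ (-(n : ℝ) / 2) * Real.exp (-(c * ‖x‖ ^ 2) / (4 * t)) else 0

lemma pow_le_factorial_mul_exp (x : ℝ) (hx : 0 ≤ x) (n : ℕ) :
    x ^ n ≤ (n.factorial : ℝ) * Real.exp x := by
  have h := Real.sum_le_exp_of_nonneg hx (n + 1)
  have h1 : x ^ n / (n.factorial : ℝ) ≤ ∑ i ∈ Finset.range (n + 1), x ^ i / i.factorial :=
    Finset.single_le_sum (f := fun i => x ^ i / (i.factorial : ℝ))
      (fun i _ => by positivity) (Finset.self_mem_range_succ n)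
  have hfac : (0 : ℝ) < n.factorial := by positivity
  rw [mul_comm]
  exact (div_le_iff₀ hfac).mp (h1.trans h)

-- measurability of the squared kernel
lemma gaussKernelC_meas (n : ℕ) (c : ℝ) (z : EuclideanSpace ℝ (Fin n)) (τ : ℝ) :
    Measurable (fun p : EuclideanSpace ℝ (Fin n) × ℝ =>
      (gaussKernelC n c (z - p.1) (τ - p.2)) ^ 2) := by
  have heq : (fun p : EuclideanSpace ℝ (Fin n) × ℝ =>
      (gaussKernelC n c (z - p.1) (τ - p.2)) ^ 2) = fun p =>
      (if 0 < τ - p.2 then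
        c⁻¹ * Real.exp (-(n : ℝ) / 2 * Real.log (4 * π * (τ - p.2)))
          * Real.exp (-(c * ‖z - p.1‖ ^ 2) / (4 * (τ - p.2)))
      else 0) ^ 2 := by
    funext p
    unfold gaussKernelC
    by_cases h : 0 < τ - p.2
    · rw [if_pos h, if_pos h, Real.rpow_def_of_pos (by positivity)]
      ring_nf
    · rw [if_neg h, if_neg h]
  rw [heq]
  apply Measurable.pow_const
  have hs : MeasurableSet {p : EuclideanSpace ℝ (Fin n) × ℝ | 0 < τ - p.2} :=
    measurableSet_lt measurable_const (measurable_const.sub measurable_snd)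
  refine Measurable.ite hs ?_ measurable_const
  apply Measurable.mul
  · apply Measurable.mul measurable_const
    exact Real.measurable_exp.comp
      ((Real.measurable_log.comp ((measurable_const.sub measurable_snd).const_mul (4 * π))).const_mul _)
  · apply Real.measurable_exp.comp
    apply Measurable.div
    · exact (((measurable_fst.const_sub z).norm.pow_const 2).const_mul c).neg
    · exact (measurable_const.sub measurable_snd).const_mul 4

theorem stmt11 (n : ℕ) (hn : 1 ≤ n) (C : ℝ) (hC : 0 < C) :
    ∃ C' > 0, ∀ (Ω : Set (EuclideanSpace ℝ (Fin n))) (x : EuclideanSpace ℝ (Fin n)) (t r : ℝ),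
      0 < r → ∀ z ∈ ball x r, ∀ τ ∈ Ioc (t - r ^ 2) t,
        (∫ p in ((ball x (3 * r / 2) \ ball x (5 * r / 4)) ∩ Ω) ×ˢ Ioc (t - (3 * r / 2) ^ 2) t,
            (gaussKernelC n C (z - p.1) (τ - p.2)) ^ 2)
          ≤ C' * r ^ ((2 : ℝ) - n) := by
  classical
  set κ : ℝ := (volume (ball (0 : EuclideanSpace ℝ (Fin n)) 1)).toReal with hκdef
  have hκpos : 0 < κ := by
    apply ENNReal.toReal_pos
    · exact (measure_ball_pos volume _ one_pos).ne'
    · exact (measure_ball_lt_top).ne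
  set K : ℝ := C⁻¹ ^ 2 * (4 * π) ^ (-(n : ℝ)) * ((n.factorial : ℝ) * (32 / C) ^ n) with hKdef
  have hπ : (0 : ℝ) < 4 * π := by positivity
  have hKpos : 0 < K := by
    apply mul_pos (mul_pos (by positivity) (Real.rpow_pos_of_pos hπ _))
    positivity
  refine ⟨K * (κ * (3 / 2) ^ n * (9 / 4)), by positivity, ?_⟩
  intro Ω x t r hr z hz τ hτ
  set A := (ball x (3 * r / 2) \ ball x (5 * r / 4)) ∩ Ω
  set I := Ioc (t - (3 * r / 2) ^ 2) t
  set S := A ×ˢ I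
  -- pointwise bound
  have hbound : ∀ p ∈ S, ‖(gaussKernelC n C (z - p.1) (τ - p.2)) ^ 2‖
      ≤ K * r ^ (-(2 : ℝ) * n) := by
    intro p hp
    obtain ⟨hpA, _⟩ := hp
    have hdist : r / 4 ≤ ‖z - p.1‖ := by
      have h1 : dist z x < r := mem_ball.mp hz
      have h2 : 5 * r / 4 ≤ dist p.1 x := by
        simpa [mem_ball, not_lt] using hpA.1.2
      have h3 : dist p.1 x ≤ dist p.1 z + dist z x := dist_triangle p.1 z x
      have h4 : dist p.1 z = dist z p.1 := dist_comm p.1 z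
      rw [← dist_eq_norm]
      linarith
    have hKr : 0 < K * r ^ (-(2 : ℝ) * n) := by
      exact mul_pos hKpos (Real.rpow_pos_of_pos hr _)
    rw [Real.norm_eq_abs, abs_of_nonneg (sq_nonneg _)]
    set s := τ - p.2 with hs
    by_cases hspos : 0 < s
    · rw [gaussKernelC, if_pos hspos]
      have hπs : (0 : ℝ) < 4 * π * s := by positivity
      have hrw : (C⁻¹ * (4 * π * s) ^ (-(n : ℝ) / 2) * Real.exp (-(C * ‖z - p.1‖ ^ 2) / (4 * s))) ^ 2
          = C⁻¹ ^ 2 * ((4 * π * s) ^ (-(n : ℝ) / 2)) ^ 2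
            * Real.exp (-(C * ‖z - p.1‖ ^ 2) / (4 * s)) ^ 2 := by ring
      rw [hrw]
      have hpow : ((4 * π * s) ^ (-(n : ℝ) / 2)) ^ 2 = (4 * π * s) ^ (-(n : ℝ)) := by
        rw [← Real.rpow_natCast (((4 * π * s) ^ (-(n : ℝ) / 2))) 2, ← Real.rpow_mul hπs.le]
        norm_num
      have hexp : Real.exp (-(C * ‖z - p.1‖ ^ 2) / (4 * s)) ^ 2
          = Real.exp (-(C * ‖z - p.1‖ ^ 2) / (2 * s)) := by
        rw [← Real.exp_nat_mul]
        congr 1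
        field_simp
        ring
      rw [hpow, hexp]
      -- split (4πs)^(-n) = (4π)^(-n) * s^(-n)
      have hsplit : (4 * π * s) ^ (-(n : ℝ)) = (4 * π) ^ (-(n : ℝ)) * s ^ (-(n : ℝ)) :=
        Real.mul_rpow hπ.le hspos.le
      rw [hsplit]
      -- bound exp term: ‖z-p.1‖ ≥ r/4 so exponent ≤ -C r²/(32 s)
      have hexple : Real.exp (-(C * ‖z - p.1‖ ^ 2) / (2 * s))
          ≤ Real.exp (-(C * r ^ 2 / 32) / s) := by
        apply Real.exp_le_exp.mpr
        rw [div_le_div_iff₀ (by positivity) hspos]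
        have h1 : (r / 4) ^ 2 ≤ ‖z - p.1‖ ^ 2 := by
          apply pow_le_pow_left₀ (by positivity) hdist
        nlinarith [mul_le_mul_of_nonneg_left (mul_le_mul_of_nonneg_right h1 hspos.le) hC.le]
      set a : ℝ := C * r ^ 2 / 32 with hadef
      have ha : 0 < a := by positivity
      -- s^(-n) * exp(-a/s) ≤ n! / a^n
      have hkey : s ^ (-(n : ℝ)) * Real.exp (-a / s) ≤ (n.factorial : ℝ) / a ^ n := by
        have hx : (0 : ℝ) ≤ a / s := by positivity
        have h := pow_le_factorial_mul_exp (a / s) hx n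
        have hsn : s ^ (-(n : ℝ)) = (s ^ n)⁻¹ := by
          rw [Real.rpow_neg hspos.le, Real.rpow_natCast]
        rw [hsn]
        have hexpinv : Real.exp (-a / s) = (Real.exp (a / s))⁻¹ := by
          rw [← Real.exp_neg]; congr 1; ring
        rw [hexpinv]
        rw [div_pow] at h
        have hexppos : (0 : ℝ) < Real.exp (a / s) := Real.exp_pos _
        have hspow : (0 : ℝ) < s ^ n := by positivity
        have hapow : (0 : ℝ) < a ^ n := by positivity
        rw [le_div_iff₀ hapow]
        have heq2 : (s ^ n)⁻¹ * (Real.exp (a / s))⁻¹ * a ^ n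
            = (a ^ n / s ^ n) / Real.exp (a / s) := by field_simp
        rw [heq2, div_le_iff₀ hexppos]
        exact h
      have haneg : a ^ n = (C / 32) ^ n * (r ^ 2) ^ n := by
        rw [hadef, ← mul_pow]; congr 1; ring
      calc C⁻¹ ^ 2 * ((4 * π) ^ (-(n : ℝ)) * s ^ (-(n : ℝ)))
            * Real.exp (-(C * ‖z - p.1‖ ^ 2) / (2 * s))
          ≤ C⁻¹ ^ 2 * ((4 * π) ^ (-(n : ℝ)) * s ^ (-(n : ℝ))) * Real.exp (-a / s) := by
            apply mul_le_mul_of_nonneg_left hexple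
            have : (0:ℝ) ≤ s ^ (-(n : ℝ)) := (Real.rpow_pos_of_pos hspos _).le
            positivity
        _ = C⁻¹ ^ 2 * (4 * π) ^ (-(n : ℝ)) * (s ^ (-(n : ℝ)) * Real.exp (-a / s)) := by ring
        _ ≤ C⁻¹ ^ 2 * (4 * π) ^ (-(n : ℝ)) * ((n.factorial : ℝ) / a ^ n) := by
            apply mul_le_mul_of_nonneg_left hkey
            have : (0:ℝ) ≤ (4 * π) ^ (-(n : ℝ)) := (Real.rpow_pos_of_pos hπ _).le
            positivity
        _ = K * r ^ (-(2 : ℝ) * n) := by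
            rw [hKdef, haneg]
            have hrpow : r ^ (-(2 : ℝ) * n) = ((r ^ 2) ^ n)⁻¹ := by
              rw [show (-(2 : ℝ) * n) = -(2 * n : ℕ) by push_cast; ring,
                Real.rpow_neg hr.le, Real.rpow_natCast, pow_mul]
            rw [hrpow]
            have h32 : (32 / C) ^ n = ((C / 32) ^ n)⁻¹ := by
              rw [← inv_pow]; congr 1; field_simp
            rw [h32]
            have hc32 : (0:ℝ) < (C / 32) ^ n := by positivity
            have hr2 : (0:ℝ) < (r ^ 2) ^ n := by positivity
            field_simp
    · rw [gaussKernelC, if_neg hspos]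
      simpa using hKr.le
  -- measure of S
  have hμA : volume A ≤ ENNReal.ofReal ((3 / 2) ^ n * r ^ n) * volume (ball (0 : EuclideanSpace ℝ (Fin n)) 1) := by
    have hsub : A ⊆ ball x (3 * r / 2) := fun p hp => hp.1.1
    refine (measure_mono hsub).trans_eq ?_
    rw [Measure.addHaar_ball_of_pos volume x (by positivity : (0:ℝ) < 3 * r / 2)]
    congr 1
    rw [finrank_euclideanSpace_fin]
    congr 1
    rw [← mul_pow]
    congr 1
    ring
  have hμI : volume I = ENNReal.ofReal ((9 / 4) * r ^ 2) := by
    rw [Real.volume_Ioc]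
    congr 1
    ring
  have hμS : volume S = volume A * volume I := by
    rw [show (volume : Measure (EuclideanSpace ℝ (Fin n) × ℝ)) = (volume).prod volume from
      Measure.volume_eq_prod _ _, Measure.prod_prod]
  have hμSfin : volume S < ⊤ := by
    rw [hμS, hμI]
    exact ENNReal.mul_lt_top
      (hμA.trans_lt (ENNReal.mul_lt_top ENNReal.ofReal_lt_top measure_ball_lt_top))
      ENNReal.ofReal_lt_top
  have hμSle : (volume S).toReal ≤ (3 / 2) ^ n * r ^ n * κ * ((9 / 4) * r ^ 2) := by
    rw [hμS, hμI]
    have h1 : volume A * ENNReal.ofReal ((9 / 4) * r ^ 2)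
        ≤ ENNReal.ofReal ((3 / 2) ^ n * r ^ n) * volume (ball (0 : EuclideanSpace ℝ (Fin n)) 1)
          * ENNReal.ofReal ((9 / 4) * r ^ 2) :=
      mul_le_mul_left hμA _
    have hfin2 : ENNReal.ofReal ((3 / 2) ^ n * r ^ n)
        * volume (ball (0 : EuclideanSpace ℝ (Fin n)) 1) * ENNReal.ofReal ((9 / 4) * r ^ 2) ≠ ⊤ :=
      (ENNReal.mul_lt_top (ENNReal.mul_lt_top ENNReal.ofReal_lt_top measure_ball_lt_top)
        ENNReal.ofReal_lt_top).ne
    have h2 := ENNReal.toReal_mono hfin2 h1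
    refine h2.trans_eq ?_
    rw [ENNReal.toReal_mul, ENNReal.toReal_mul, ENNReal.toReal_ofReal (by positivity),
      ENNReal.toReal_ofReal (by positivity)]
    try ring
  have hmeas : AEStronglyMeasurable
      (fun p : EuclideanSpace ℝ (Fin n) × ℝ => (gaussKernelC n C (z - p.1) (τ - p.2)) ^ 2)
      (volume.restrict S) := (gaussKernelC_meas n C z τ).aestronglyMeasurable
  have hint := norm_setIntegral_le_of_norm_le_const hμSfin hbound
  have hle : (∫ p in S, (gaussKernelC n C (z - p.1) (τ - p.2)) ^ 2)
      ≤ K * r ^ (-(2 : ℝ) * n) * (volume S).toReal :=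
    (le_abs_self _).trans (by rwa [Real.norm_eq_abs] at hint)
  refine hle.trans ?_
  have hKr : 0 < K * r ^ (-(2 : ℝ) * n) := mul_pos hKpos (Real.rpow_pos_of_pos hr _)
  calc K * r ^ (-(2 : ℝ) * n) * (volume S).toReal
      ≤ K * r ^ (-(2 : ℝ) * n) * ((3 / 2) ^ n * r ^ n * κ * ((9 / 4) * r ^ 2)) :=
        mul_le_mul_of_nonneg_left hμSle hKr.le
    _ = K * (κ * (3 / 2) ^ n * (9 / 4)) * r ^ ((2 : ℝ) - n) := by
        have : r ^ (-(2 : ℝ) * n) * (r ^ n * r ^ 2) = r ^ ((2 : ℝ) - n) := by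
          rw [← Real.rpow_natCast r n, ← Real.rpow_two,
            ← Real.rpow_add hr, ← Real.rpow_add hr]
          congr 1
          ring
        rw [← this]
        ring
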